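/- Let H : ℝ^D → Matrix (Fin N) (Fin N) ℂ be continuously differentiable with H(θ) Hermitian for every θ, let Ω ∈ ℝ^D and θ_0 ∈ ℝ^D, and let U(t; θ_0) be the solution of i ∂_t U(t;θ_0) = H(Ω t + θ_0) U(t;θ_0) with U(0;θ_0) = 1. Then for every j ∈ {1,…,D} and every t: −i U(t;θ_0)† ∂_{θ_{0j}} U(t;θ_0) = − ∫_0^t U(s;θ_0)† (∂_j H)(Ω s + θ_0) U(s;θ_0) ds. (The frequency-lattice displacement Δn(t) = −i U† ∇_{θ_0} U equals the time integral of the Heisenberg photon-current operator ṅ = −U†(∇_θ H)U.) -/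

import Mathlib

open Matrix
open scoped Matrix.Norms.L2Operator

/-- Partial derivative in the `j`-th coordinate of a matrix-valued function on `ℝ^D`. -/
noncomputable def matPderiv {N D : ℕ} (j : Fin D)
    (H : (Fin D → ℝ) → Matrix (Fin N) (Fin N) ℂ) (θ : Fin D → ℝ) :
    Matrix (Fin N) (Fin N) ℂ :=
  deriv (fun s => H (Function.update θ j s)) (θ j)

namespace FreqAux

variable {N D : ℕ}

lemma update_eq_add (θ : Fin D → ℝ) (j : Fin D) (s : ℝ) :
    Function.update θ j s = θ + (s - θ j) • (Pi.single j 1 : Fin D → ℝ) := by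
  funext i
  by_cases h : i = j
  · subst h; simp
  · simp [Function.update_of_ne h, Pi.single_eq_of_ne h]

lemma norm_single_le (j : Fin D) : ‖(Pi.single j (1:ℝ) : Fin D → ℝ)‖ ≤ 1 := by
  rw [pi_norm_le_iff_of_nonneg zero_le_one]
  intro i
  by_cases h : i = j
  · subst h; simp
  · simp [Pi.single_eq_of_ne h]

lemma abs_le_abs_of_mem_uIcc {σ t : ℝ} (h : σ ∈ Set.uIcc 0 t) : |σ| ≤ |t| := by
  rcases le_total 0 t with ht | ht
  · rw [Set.uIcc_of_le ht] at h
    rw [abs_of_nonneg h.1, abs_of_nonneg ht]; exact h.2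
  · rw [Set.uIcc_of_ge ht] at h
    rw [abs_of_nonpos h.2, abs_of_nonpos ht]; exact neg_le_neg h.1

lemma matPderiv_eq_fderiv (H : (Fin D → ℝ) → Matrix (Fin N) (Fin N) ℂ)
    (hH : ContDiff ℝ 1 H) (j : Fin D) (θ : Fin D → ℝ) :
    matPderiv j H θ = fderiv ℝ H θ (Pi.single j 1) := by
  have hg : HasDerivAt (fun s => Function.update θ j s) (Pi.single j (1:ℝ)) (θ j) := by
    simp only [update_eq_add θ j]
    have h1 : HasDerivAt (fun s : ℝ => s - θ j) 1 (θ j) := (hasDerivAt_id _).sub_const _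
    have h2 := h1.smul_const (Pi.single j 1 : Fin D → ℝ)
    simpa using h2.const_add θ
  have h0 : Function.update θ j (θ j) = θ := Function.update_eq_self j θ
  have hd : HasFDerivAt H (fderiv ℝ H θ) (Function.update θ j (θ j)) := by
    rw [h0]; exact (hH.differentiable one_ne_zero θ).hasFDerivAt
  exact (hd.comp_hasDerivAt (θ j) hg).deriv
variable {H : (Fin D → ℝ) → Matrix (Fin N) (Fin N) ℂ}
  {Ω : Fin D → ℝ} {U : ℝ → (Fin D → ℝ) → Matrix (Fin N) (Fin N) ℂ}

lemma hasDerivAt_conjT (hHherm : ∀ θ, (H θ)ᴴ = H θ)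
    (hUode : ∀ (t : ℝ) (φ : Fin D → ℝ),
      HasDerivAt (fun s => U s φ) ((-Complex.I) • (H (t • Ω + φ) * U t φ)) t)
    (t : ℝ) (φ : Fin D → ℝ) :
    HasDerivAt (fun s => (U s φ)ᴴ) (Complex.I • ((U t φ)ᴴ * H (t • Ω + φ))) t := by
  have h := (hUode t φ).star
  refine h.congr_deriv ?_
  simp [Matrix.star_eq_conjTranspose, Matrix.conjTranspose_smul, Matrix.conjTranspose_mul,
    hHherm]

lemma contU (hUode : ∀ (t : ℝ) (φ : Fin D → ℝ),
      HasDerivAt (fun s => U s φ) ((-Complex.I) • (H (t • Ω + φ) * U t φ)) t)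
    (φ : Fin D → ℝ) : Continuous fun s => U s φ :=
  continuous_iff_continuousAt.2 fun t => (hUode t φ).continuousAt

lemma unitary_U (hHherm : ∀ θ, (H θ)ᴴ = H θ)
    (hU0 : ∀ φ, U 0 φ = 1)
    (hUode : ∀ (t : ℝ) (φ : Fin D → ℝ),
      HasDerivAt (fun s => U s φ) ((-Complex.I) • (H (t • Ω + φ) * U t φ)) t)
    (t : ℝ) (φ : Fin D → ℝ) : (U t φ)ᴴ * U t φ = 1 := by
  have hg : ∀ σ, HasDerivAt (fun τ => (U τ φ)ᴴ * U τ φ) 0 σ := by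
    intro σ
    have := ((hasDerivAt_conjT hHherm hUode σ φ).mul (hUode σ φ))
    refine this.congr_deriv ?_
    simp [smul_mul_assoc, mul_smul_comm, mul_assoc]
  have hconst := is_const_of_deriv_eq_zero (fun σ => (hg σ).differentiableAt)
    (fun σ => (hg σ).deriv) t 0
  simpa [hU0 φ] using hconst

lemma unitary_U' (hHherm : ∀ θ, (H θ)ᴴ = H θ)
    (hU0 : ∀ φ, U 0 φ = 1)
    (hUode : ∀ (t : ℝ) (φ : Fin D → ℝ),
      HasDerivAt (fun s => U s φ) ((-Complex.I) • (H (t • Ω + φ) * U t φ)) t)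
    (t : ℝ) (φ : Fin D → ℝ) : U t φ * (U t φ)ᴴ = 1 :=
  mul_eq_one_comm.mp (unitary_U hHherm hU0 hUode t φ)

lemma norm_U_le [Nonempty (Fin N)] (hHherm : ∀ θ, (H θ)ᴴ = H θ)
    (hU0 : ∀ φ, U 0 φ = 1)
    (hUode : ∀ (t : ℝ) (φ : Fin D → ℝ),
      HasDerivAt (fun s => U s φ) ((-Complex.I) • (H (t • Ω + φ) * U t φ)) t)
    (t : ℝ) (φ : Fin D → ℝ) : ‖U t φ‖ ≤ 1 := by
  have h2 : ‖U t φ‖ * ‖U t φ‖ = 1 := by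
    rw [← CStarRing.norm_star_mul_self (x := U t φ), Matrix.star_eq_conjTranspose,
      unitary_U hHherm hU0 hUode t φ, norm_one]
  nlinarith [norm_nonneg (U t φ)]

lemma norm_UconjT_le [Nonempty (Fin N)] (hHherm : ∀ θ, (H θ)ᴴ = H θ)
    (hU0 : ∀ φ, U 0 φ = 1)
    (hUode : ∀ (t : ℝ) (φ : Fin D → ℝ),
      HasDerivAt (fun s => U s φ) ((-Complex.I) • (H (t • Ω + φ) * U t φ)) t)
    (t : ℝ) (φ : Fin D → ℝ) : ‖(U t φ)ᴴ‖ ≤ 1 := by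
  rw [Matrix.l2_opNorm_conjTranspose]
  exact norm_U_le hHherm hU0 hUode t φ
lemma cont_line (Ω φ : Fin D → ℝ) : Continuous fun σ : ℝ => σ • Ω + φ :=
  (continuous_id.smul continuous_const).add continuous_const

lemma duhamel (hH : ContDiff ℝ 1 H) (hHherm : ∀ θ, (H θ)ᴴ = H θ)
    (hU0 : ∀ φ, U 0 φ = 1)
    (hUode : ∀ (t : ℝ) (φ : Fin D → ℝ),
      HasDerivAt (fun s => U s φ) ((-Complex.I) • (H (t • Ω + φ) * U t φ)) t)
    (φ ψ : Fin D → ℝ) (t : ℝ) :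
    (U t ψ)ᴴ * U t φ = 1 + (-Complex.I) •
      ∫ σ in (0:ℝ)..t, (U σ ψ)ᴴ * (H (σ • Ω + φ) - H (σ • Ω + ψ)) * U σ φ := by
  have hA : ∀ σ : ℝ, HasDerivAt (fun τ => (U τ ψ)ᴴ * U τ φ)
      ((-Complex.I) • ((U σ ψ)ᴴ * (H (σ • Ω + φ) - H (σ • Ω + ψ)) * U σ φ)) σ := by
    intro σ
    have := (hasDerivAt_conjT hHherm hUode σ ψ).mul (hUode σ φ)
    refine this.congr_deriv ?_
    simp [smul_mul_assoc, mul_smul_comm, mul_assoc, mul_sub, sub_mul, smul_sub, add_comm]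
  have hcont : Continuous fun σ : ℝ =>
      (U σ ψ)ᴴ * (H (σ • Ω + φ) - H (σ • Ω + ψ)) * U σ φ :=
    (((contU hUode ψ).star.mul
      ((hH.continuous.comp (cont_line Ω φ)).sub (hH.continuous.comp (cont_line Ω ψ)))).mul
      (contU hUode φ))
  have hFTC := intervalIntegral.integral_eq_sub_of_hasDerivAt (f' := fun σ =>
      (-Complex.I) • ((U σ ψ)ᴴ * (H (σ • Ω + φ) - H (σ • Ω + ψ)) * U σ φ))
    (fun σ _ => hA σ) (by exact (hcont.const_smul (-Complex.I)).intervalIntegrable 0 t)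
  rw [intervalIntegral.integral_smul] at hFTC
  rw [← sub_eq_iff_eq_add']
  rw [hFTC, hU0 φ, hU0 ψ]
  simp

lemma diff_formula (hH : ContDiff ℝ 1 H) (hHherm : ∀ θ, (H θ)ᴴ = H θ)
    (hU0 : ∀ φ, U 0 φ = 1)
    (hUode : ∀ (t : ℝ) (φ : Fin D → ℝ),
      HasDerivAt (fun s => U s φ) ((-Complex.I) • (H (t • Ω + φ) * U t φ)) t)
    (φ ψ : Fin D → ℝ) (t : ℝ) :
    U t φ - U t ψ = U t ψ * ((-Complex.I) •
      ∫ σ in (0:ℝ)..t, (U σ ψ)ᴴ * (H (σ • Ω + φ) - H (σ • Ω + ψ)) * U σ φ) := by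
  have h := congrArg (fun M => U t ψ * M) (duhamel hH hHherm hU0 hUode φ ψ t)
  simp only [mul_add, mul_one, ← mul_assoc, unitary_U' hHherm hU0 hUode t ψ, one_mul] at h
  rw [sub_eq_iff_eq_add']
  exact h

lemma norm_sandwich {A B C : Matrix (Fin N) (Fin N) ℂ} {c : ℝ}
    (hA : ‖A‖ ≤ 1) (hB : ‖B‖ ≤ c) (hC : ‖C‖ ≤ 1) : ‖A * B * C‖ ≤ c := by
  have hc0 : 0 ≤ c := le_trans (norm_nonneg _) hB
  calc ‖A * B * C‖ ≤ ‖A * B‖ * ‖C‖ := norm_mul_le _ _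
    _ ≤ (‖A‖ * ‖B‖) * ‖C‖ := by
        apply mul_le_mul_of_nonneg_right (norm_mul_le _ _) (norm_nonneg _)
    _ ≤ (1 * c) * 1 := by
        apply mul_le_mul _ hC (norm_nonneg _) (by positivity)
        exact mul_le_mul hA hB (norm_nonneg _) zero_le_one
    _ = c := by ring

lemma norm_mul_negI_smul_le {A X : Matrix (Fin N) (Fin N) ℂ} {b : ℝ}
    (hA : ‖A‖ ≤ 1) (hX : ‖X‖ ≤ b) : ‖A * ((-Complex.I) • X)‖ ≤ b := by
  have hb0 : 0 ≤ b := le_trans (norm_nonneg _) hX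
  calc ‖A * ((-Complex.I) • X)‖ ≤ ‖A‖ * ‖(-Complex.I) • X‖ := norm_mul_le _ _
    _ = ‖A‖ * ‖X‖ := by rw [norm_smul]; simp
    _ ≤ 1 * b := mul_le_mul hA hX (norm_nonneg _) zero_le_one
    _ = b := one_mul _

lemma norm_diff_le [Nonempty (Fin N)] (hH : ContDiff ℝ 1 H) (hHherm : ∀ θ, (H θ)ᴴ = H θ)
    (hU0 : ∀ φ, U 0 φ = 1)
    (hUode : ∀ (t : ℝ) (φ : Fin D → ℝ),
      HasDerivAt (fun s => U s φ) ((-Complex.I) • (H (t • Ω + φ) * U t φ)) t)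
    (φ ψ : Fin D → ℝ) (t : ℝ) (c : ℝ) (hc0 : 0 ≤ c)
    (hc : ∀ σ ∈ Set.uIoc 0 t, ‖H (σ • Ω + φ) - H (σ • Ω + ψ)‖ ≤ c) :
    ‖U t φ - U t ψ‖ ≤ c * |t| := by
  rw [diff_formula hH hHherm hU0 hUode φ ψ t]
  have hI : ‖∫ σ in (0:ℝ)..t, (U σ ψ)ᴴ * (H (σ • Ω + φ) - H (σ • Ω + ψ)) * U σ φ‖
      ≤ c * |t| := by
    have := intervalIntegral.norm_integral_le_of_norm_le_const (C := c)
      (f := fun σ => (U σ ψ)ᴴ * (H (σ • Ω + φ) - H (σ • Ω + ψ)) * U σ φ) (a := 0) (b := t)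
      (fun σ hσ => norm_sandwich (norm_UconjT_le hHherm hU0 hUode σ ψ) (hc σ hσ)
        (norm_U_le hHherm hU0 hUode σ φ))
    rwa [sub_zero] at this
  exact norm_mul_negI_smul_le (norm_U_le hHherm hU0 hUode t ψ) hI
set_option maxHeartbeats 2000000 in
lemma key [Nonempty (Fin N)] (hH : ContDiff ℝ 1 H) (hHherm : ∀ θ, (H θ)ᴴ = H θ)
    (hU0 : ∀ φ, U 0 φ = 1)
    (hUode : ∀ (t : ℝ) (φ : Fin D → ℝ),
      HasDerivAt (fun s => U s φ) ((-Complex.I) • (H (t • Ω + φ) * U t φ)) t)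
    (θ₀ : Fin D → ℝ) (j : Fin D) (t : ℝ) :
    HasDerivAt (fun s => U t (Function.update θ₀ j s))
      (U t θ₀ * ((-Complex.I) • ∫ σ in (0:ℝ)..t,
        (U σ θ₀)ᴴ * (fderiv ℝ H (σ • Ω + θ₀) (Pi.single j 1)) * U σ θ₀)) (θ₀ j) := by
  have hHd : Differentiable ℝ H := hH.differentiable one_ne_zero
  set e : Fin D → ℝ := Pi.single j 1 with he
  -- compact convex set containing all relevant points
  set Kset : Set (Fin D → ℝ) := Metric.closedBall θ₀ (|t| * ‖Ω‖ + 1) with hKdef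
  have hKco : Convex ℝ Kset := convex_closedBall _ _
  have hKcp : IsCompact Kset := isCompact_closedBall _ _
  have hmem : ∀ σ : ℝ, |σ| ≤ |t| → ∀ z : Fin D → ℝ, ‖z - (σ • Ω + θ₀)‖ ≤ 1 → z ∈ Kset := by
    intro σ hσ z hz
    rw [hKdef, Metric.mem_closedBall, dist_eq_norm]
    have h1 : z - θ₀ = (z - (σ • Ω + θ₀)) + σ • Ω := by abel
    calc ‖z - θ₀‖ = ‖(z - (σ • Ω + θ₀)) + σ • Ω‖ := by rw [h1]
      _ ≤ ‖z - (σ • Ω + θ₀)‖ + ‖σ • Ω‖ := norm_add_le _ _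
      _ ≤ 1 + |σ| * ‖Ω‖ := by
          rw [norm_smul, Real.norm_eq_abs]; exact add_le_add_left hz _
      _ ≤ |t| * ‖Ω‖ + 1 := by nlinarith [norm_nonneg Ω]
  -- bound on the derivative of H
  have hfc : Continuous (fderiv ℝ H) := hH.continuous_fderiv one_ne_zero
  obtain ⟨L0, hL0⟩ := hKcp.exists_bound_of_continuousOn hfc.continuousOn
  set L := max L0 0 with hLdef
  have hLnn : 0 ≤ L := le_max_right _ _
  have hLb : ∀ x ∈ Kset, ‖fderiv ℝ H x‖ ≤ L := fun x hx => (hL0 x hx).trans (le_max_left _ _)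
  have hLip : ∀ x ∈ Kset, ∀ y ∈ Kset, ‖H y - H x‖ ≤ L * ‖y - x‖ := fun x hx y hy =>
    hKco.norm_image_sub_le_of_norm_fderiv_le (fun z _ => hHd.differentiableAt) hLb hx hy
  have hUC : UniformContinuousOn (fderiv ℝ H) Kset :=
    hKcp.uniformContinuousOn_of_continuous hfc.continuousOn
  -- continuity facts
  have hcontG : Continuous fun σ : ℝ =>
      (U σ θ₀)ᴴ * (fderiv ℝ H (σ • Ω + θ₀) e) * U σ θ₀ :=
    (((contU hUode θ₀).star.mul
      ((hfc.comp (cont_line Ω θ₀)).clm_apply continuous_const)).mul (contU hUode θ₀))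
  rw [hasDerivAt_iff_isLittleO, Asymptotics.isLittleO_iff]
  intro c hc
  set ε := c / (2 * (|t| + 1)) with hεdef
  have hεpos : 0 < ε := by positivity
  obtain ⟨δ, hδpos, hδ⟩ := Metric.uniformContinuousOn_iff.mp hUC ε hεpos
  set η := min (δ / 2) (min 1 (c / (2 * (L ^ 2 * t ^ 2 + 1)))) with hηdef
  have hηpos : 0 < η := by positivity
  filter_upwards [Metric.ball_mem_nhds (θ₀ j) hηpos] with s hs
  rw [Metric.mem_ball, Real.dist_eq] at hs
  set h := s - θ₀ j with hh
  have hh1 : |h| ≤ 1 :=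
    le_trans hs.le (le_trans (min_le_right _ _) (min_le_left _ _))
  have hh2 : |h| ≤ c / (2 * (L ^ 2 * t ^ 2 + 1)) :=
    le_trans hs.le (le_trans (min_le_right _ _) (min_le_right _ _))
  have hhδ : |h| < δ :=
    lt_of_lt_of_le (lt_of_lt_of_le hs (min_le_left _ _)) (half_le_self hδpos.le)
  set φs := Function.update θ₀ j s with hφsdef
  have hφs : φs = θ₀ + h • e := update_eq_add θ₀ j s
  have hnorm_he : ‖h • e‖ ≤ |h| := by
    rw [norm_smul, Real.norm_eq_abs]
    calc |h| * ‖e‖ ≤ |h| * 1 := by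
          exact mul_le_mul_of_nonneg_left (norm_single_le j) (abs_nonneg _)
      _ = |h| := mul_one _
  have hdiffpt : ∀ σ : ℝ, σ • Ω + φs - (σ • Ω + θ₀) = h • e := by
    intro σ; rw [hφs]; abel
  have hmemθ : ∀ σ ∈ Set.uIcc (0:ℝ) t, σ • Ω + θ₀ ∈ Kset := fun σ hσ =>
    hmem σ (abs_le_abs_of_mem_uIcc hσ) _ (by simp)
  have hmemφ : ∀ σ ∈ Set.uIcc (0:ℝ) t, σ • Ω + φs ∈ Kset := fun σ hσ => by
    refine hmem σ (abs_le_abs_of_mem_uIcc hσ) _ ?_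
    rw [hdiffpt σ]; exact le_trans hnorm_he hh1
  -- Lipschitz bound on ΔH
  have hΔ : ∀ σ ∈ Set.uIcc (0:ℝ) t, ‖H (σ • Ω + φs) - H (σ • Ω + θ₀)‖ ≤ L * |h| := by
    intro σ hσ
    calc ‖H (σ • Ω + φs) - H (σ • Ω + θ₀)‖
        ≤ L * ‖σ • Ω + φs - (σ • Ω + θ₀)‖ := hLip _ (hmemθ σ hσ) _ (hmemφ σ hσ)
      _ ≤ L * |h| := by
          rw [hdiffpt σ]
          exact mul_le_mul_of_nonneg_left hnorm_he hLnn
  -- bound on U difference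
  have hUd : ∀ σ ∈ Set.uIcc (0:ℝ) t, ‖U σ φs - U σ θ₀‖ ≤ (L * |h|) * |t| := by
    intro σ hσ
    have hsub : Set.uIoc (0:ℝ) σ ⊆ Set.uIcc (0:ℝ) t :=
      le_trans Set.uIoc_subset_uIcc (Set.uIcc_subset_uIcc Set.left_mem_uIcc hσ)
    have := norm_diff_le hH hHherm hU0 hUode φs θ₀ σ (L * |h|)
      (mul_nonneg hLnn (abs_nonneg _)) (fun τ hτ => hΔ τ (hsub hτ))
    calc ‖U σ φs - U σ θ₀‖ ≤ (L * |h|) * |σ| := this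
      _ ≤ (L * |h|) * |t| := by
          exact mul_le_mul_of_nonneg_left (abs_le_abs_of_mem_uIcc hσ)
            (mul_nonneg hLnn (abs_nonneg _))
  -- second-order Taylor bound on H
  have hfd : ∀ σ ∈ Set.uIcc (0:ℝ) t,
      ‖H (σ • Ω + φs) - H (σ • Ω + θ₀) - h • (fderiv ℝ H (σ • Ω + θ₀) e)‖ ≤ ε * |h| := by
    intro σ hσ
    set x := σ • Ω + θ₀ with hx
    have hxmem : x ∈ Kset := hmemθ σ hσ
    have hymem : σ • Ω + φs ∈ Metric.closedBall x |h| := by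
      rw [Metric.mem_closedBall, dist_eq_norm, hdiffpt σ]; exact hnorm_he
    have hballsub : Metric.closedBall x |h| ⊆ Kset := by
      intro z hz
      refine hmem σ (abs_le_abs_of_mem_uIcc hσ) z ?_
      rw [Metric.mem_closedBall, dist_eq_norm] at hz
      exact le_trans hz hh1
    have hbound : ∀ z ∈ Metric.closedBall x |h|,
        ‖fderiv ℝ H z - fderiv ℝ H x‖ ≤ ε := by
      intro z hz
      have hzd : dist z x < δ := lt_of_le_of_lt (Metric.mem_closedBall.mp hz) hhδ
      have := hδ z (hballsub hz) x hxmem hzd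
      rw [dist_eq_norm] at this
      exact this.le
    have hmvt := (convex_closedBall x |h|).norm_image_sub_le_of_norm_fderiv_le'
      (fun z _ => hHd.differentiableAt) hbound
      (Metric.mem_closedBall_self (abs_nonneg h)) hymem
    have hsimp : σ • Ω + φs - x = h • e := hdiffpt σ
    rw [hsimp, (fderiv ℝ H x).map_smul] at hmvt
    calc ‖H (σ • Ω + φs) - H x - h • (fderiv ℝ H x e)‖ ≤ ε * ‖h • e‖ := hmvt
      _ ≤ ε * |h| := mul_le_mul_of_nonneg_left hnorm_he hεpos.le
  -- assemble
  rw [Function.update_eq_self j θ₀]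
  set G : ℝ → Matrix (Fin N) (Fin N) ℂ := fun σ =>
    (U σ θ₀)ᴴ * (fderiv ℝ H (σ • Ω + θ₀) e) * U σ θ₀ with hGdef
  set KK : ℝ → Matrix (Fin N) (Fin N) ℂ := fun σ =>
    (U σ θ₀)ᴴ * (H (σ • Ω + φs) - H (σ • Ω + θ₀)) * U σ φs with hKKdef
  have hcontK : Continuous KK := by
    rw [hKKdef]
    exact (((contU hUode θ₀).star.mul
      ((hH.continuous.comp (cont_line Ω φs)).sub (hH.continuous.comp (cont_line Ω θ₀)))).mul
      (contU hUode φs))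
  have heq1 : U t φs - U t θ₀ = U t θ₀ * ((-Complex.I) • ∫ σ in (0:ℝ)..t, KK σ) :=
    diff_formula hH hHherm hU0 hUode φs θ₀ t
  have heq2 : h • (U t θ₀ * ((-Complex.I) • ∫ σ in (0:ℝ)..t, G σ))
      = U t θ₀ * ((-Complex.I) • ∫ σ in (0:ℝ)..t, h • G σ) := by
    rw [intervalIntegral.integral_smul]
    simp only [mul_smul_comm]
    rw [smul_comm]
  have heq3 : U t φs - U t θ₀ - h • (U t θ₀ * ((-Complex.I) • ∫ σ in (0:ℝ)..t, G σ))
      = U t θ₀ * ((-Complex.I) • ∫ σ in (0:ℝ)..t, (KK σ - h • G σ)) := by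
    rw [heq1, heq2, ← mul_sub, ← smul_sub,
      intervalIntegral.integral_sub (hcontK.intervalIntegrable 0 t)
        (by exact (hcontG.const_smul h).intervalIntegrable 0 t)]
  have hsplit : ∀ σ : ℝ, KK σ - h • G σ
      = (U σ θ₀)ᴴ * ((H (σ • Ω + φs) - H (σ • Ω + θ₀)) * (U σ φs - U σ θ₀))
        + (U σ θ₀)ᴴ * ((H (σ • Ω + φs) - H (σ • Ω + θ₀)
            - h • (fderiv ℝ H (σ • Ω + θ₀) e)) * U σ θ₀) := by
    intro σ
    simp only [hKKdef, hGdef]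
    simp only [mul_sub, sub_mul, mul_assoc, smul_sub, smul_mul_assoc, mul_smul_comm]
    abel
  have hAle : ∀ σ : ℝ, ∀ M : Matrix (Fin N) (Fin N) ℂ, ‖(U σ θ₀)ᴴ * M‖ ≤ ‖M‖ := by
    intro σ M
    calc ‖(U σ θ₀)ᴴ * M‖ ≤ ‖(U σ θ₀)ᴴ‖ * ‖M‖ := norm_mul_le _ _
      _ ≤ 1 * ‖M‖ := mul_le_mul_of_nonneg_right (norm_UconjT_le hHherm hU0 hUode σ θ₀)
          (norm_nonneg _)
      _ = ‖M‖ := one_mul _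
  have hpt : ∀ σ ∈ Set.uIoc (0:ℝ) t,
      ‖KK σ - h • G σ‖ ≤ (L * |h|) * ((L * |h|) * |t|) + ε * |h| := by
    intro σ hσ'
    have hσ : σ ∈ Set.uIcc (0:ℝ) t := Set.uIoc_subset_uIcc hσ'
    rw [hsplit σ]
    have hT1 : ‖(U σ θ₀)ᴴ * ((H (σ • Ω + φs) - H (σ • Ω + θ₀)) * (U σ φs - U σ θ₀))‖
        ≤ (L * |h|) * ((L * |h|) * |t|) := by
      refine le_trans (hAle σ _) ?_
      refine le_trans (norm_mul_le _ _) ?_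
      exact mul_le_mul (hΔ σ hσ) (hUd σ hσ) (norm_nonneg _) (mul_nonneg hLnn (abs_nonneg _))
    have hT2 : ‖(U σ θ₀)ᴴ * ((H (σ • Ω + φs) - H (σ • Ω + θ₀)
          - h • (fderiv ℝ H (σ • Ω + θ₀) e)) * U σ θ₀)‖ ≤ ε * |h| := by
      refine le_trans (hAle σ _) ?_
      refine le_trans (norm_mul_le _ _) ?_
      calc ‖H (σ • Ω + φs) - H (σ • Ω + θ₀) - h • (fderiv ℝ H (σ • Ω + θ₀) e)‖ * ‖U σ θ₀‖
          ≤ (ε * |h|) * 1 := mul_le_mul (hfd σ hσ) (norm_U_le hHherm hU0 hUode σ θ₀)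
            (norm_nonneg _) (by positivity)
        _ = ε * |h| := mul_one _
    exact le_trans (norm_add_le _ _) (add_le_add hT1 hT2)
  have hIn : ‖∫ σ in (0:ℝ)..t, (KK σ - h • G σ)‖
      ≤ ((L * |h|) * ((L * |h|) * |t|) + ε * |h|) * |t| := by
    have := intervalIntegral.norm_integral_le_of_norm_le_const hpt
    rwa [sub_zero] at this
  rw [heq3]
  refine le_trans (norm_mul_negI_smul_le (norm_U_le hHherm hU0 hUode t θ₀) hIn) ?_
  rw [Real.norm_eq_abs]
  have hA1 : ε * |t| ≤ c / 2 := by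
    rw [hεdef, div_mul_eq_mul_div, div_le_iff₀ (by positivity)]
    nlinarith [abs_nonneg t, hc.le]
  have hA2 : L ^ 2 * |h| * t ^ 2 ≤ c / 2 := by
    have h2 := hh2
    rw [le_div_iff₀ (by positivity : (0:ℝ) < 2 * (L ^ 2 * t ^ 2 + 1))] at h2
    nlinarith [sq_nonneg L, sq_nonneg t, abs_nonneg h]
  have hTT : |t| * |t| = t ^ 2 := by rw [← abs_mul, abs_mul_self, sq]
  calc (L * |h| * (L * |h| * |t|) + ε * |h|) * |t|
      = |h| * (L ^ 2 * |h| * t ^ 2) + |h| * (ε * |t|) := by rw [← hTT]; ring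
    _ ≤ |h| * (c / 2) + |h| * (c / 2) :=
        add_le_add (mul_le_mul_of_nonneg_left hA2 (abs_nonneg h))
          (mul_le_mul_of_nonneg_left hA1 (abs_nonneg h))
    _ = c * |h| := by ring

end FreqAux

/-- For a quasiperiodically driven system with `C¹` Hermitian Hamiltonian `H(θ)`, drive
phases `θ_t = Ω t + θ₀`, and propagator `U(t;θ₀)` solving `i ∂ₜ U = H(Ω t + θ₀) U`,
`U(0;θ₀) = 1`, the frequency-lattice displacement `Δn_j(t) = −i U† ∂_{θ₀ⱼ} U` equals the
time integral of the Heisenberg photon-current operator: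
`−i U(t)† ∂_{θ₀ⱼ} U(t) = −∫₀ᵗ U(s)† (∂_j H)(Ω s + θ₀) U(s) ds`. -/
theorem freq_lattice_displacement_eq_integral_current {N D : ℕ}
    (H : (Fin D → ℝ) → Matrix (Fin N) (Fin N) ℂ)
    (hH : ContDiff ℝ 1 H)
    (hHherm : ∀ θ, (H θ)ᴴ = H θ)
    (Ω θ₀ : Fin D → ℝ)
    (U : ℝ → (Fin D → ℝ) → Matrix (Fin N) (Fin N) ℂ)
    (hU0 : ∀ φ, U 0 φ = 1)
    (hUode : ∀ (t : ℝ) (φ : Fin D → ℝ),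
      HasDerivAt (fun s => U s φ) ((-Complex.I) • (H (t • Ω + φ) * U t φ)) t) :
    ∀ (j : Fin D) (t : ℝ),
      (-Complex.I) • ((U t θ₀)ᴴ * matPderiv j (U t) θ₀)
        = -∫ s in (0:ℝ)..t, (U s θ₀)ᴴ * matPderiv j H (s • Ω + θ₀) * U s θ₀ := by
  intro j t
  rcases Nat.eq_zero_or_pos N with hN | hN
  · subst hN
    ext i k
    exact i.elim0
  · have : Nonempty (Fin N) := ⟨⟨0, hN⟩⟩
    have hkey := FreqAux.key (H := H) (Ω := Ω) (U := U) hH hHherm hU0 hUode θ₀ j t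
    have hmat : matPderiv j (U t) θ₀
        = U t θ₀ * ((-Complex.I) • ∫ σ in (0:ℝ)..t,
            (U σ θ₀)ᴴ * (fderiv ℝ H (σ • Ω + θ₀) (Pi.single j 1)) * U σ θ₀) := hkey.deriv
    rw [hmat, ← mul_assoc, FreqAux.unitary_U hHherm hU0 hUode t θ₀, one_mul, smul_smul]
    have hII : (-Complex.I) * (-Complex.I) = -1 := by
      simp [Complex.I_mul_I]
    rw [hII, neg_one_smul]
    congr 1
    apply intervalIntegral.integral_congr
    intro σ _
    simp only [FreqAux.matPderiv_eq_fderiv H hH j]
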